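/- For real numbers x, y with x ≥ 1, one has |Γ(x + iy)/Γ(x)| ≤ exp(−(1/4)·min(|y|, y²/x)). -/

import Mathlib

open Complex Filter Finset Topology

private lemma factor_le' (a y : ℝ) (ha : 0 < a) :
    a / Real.sqrt (a ^ 2 + y ^ 2) ≤ Real.exp (-(1/4) * min 1 (y ^ 2 / a ^ 2)) := by
  have ht : 0 ≤ y ^ 2 / a ^ 2 := by positivity
  set t := y ^ 2 / a ^ 2 with htdef
  have hexp : Real.exp ((1/2) * min 1 t) ≤ 1 + t := by
    rcases le_total t 1 with h | h
    · rw [min_eq_right h]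
      have h1 : 1 - t/2 ≤ Real.exp (-(t/2)) := by
        have := Real.add_one_le_exp (-(t/2)); linarith
      have h2 : 0 < 1 - t/2 := by linarith
      have h3 : Real.exp ((1/2)*t) * (1 - t/2) ≤ 1 := by
        calc Real.exp ((1/2)*t) * (1 - t/2) ≤ Real.exp ((1/2)*t) * Real.exp (-(t/2)) := by
              exact mul_le_mul_of_nonneg_left h1 (Real.exp_nonneg _)
          _ = 1 := by rw [← Real.exp_add, show (1/2)*t + -(t/2) = 0 by ring, Real.exp_zero]
      have h4 : Real.exp ((1/2)*t) ≤ 1 / (1 - t/2) := by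
        rw [le_div_iff₀ h2]; exact h3
      have h5 : 1 / (1 - t/2) ≤ 1 + t := by
        rw [div_le_iff₀ h2]; nlinarith
      linarith
    · rw [min_eq_left h]
      have h1 : (1:ℝ)/2 ≤ Real.exp (-(1/2)) := by
        have := Real.add_one_le_exp (-(1/2):ℝ); linarith
      have h2 : Real.exp ((1/2:ℝ)*1) ≤ 2 := by
        have h3 : Real.exp ((1/2:ℝ)*1) * Real.exp (-(1/2)) = 1 := by
          rw [← Real.exp_add]; norm_num
        nlinarith [Real.exp_pos ((1/2:ℝ)*1)]
      linarith
  have hsq : (a / Real.sqrt (a ^ 2 + y ^ 2)) ^ 2 ≤ (Real.exp (-(1/4) * min 1 t)) ^ 2 := by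
    have hd : (0:ℝ) < a ^ 2 + y ^ 2 := by positivity
    have e1 : (a / Real.sqrt (a ^ 2 + y ^ 2)) ^ 2 = a ^ 2 / (a ^ 2 + y ^ 2) := by
      rw [div_pow, Real.sq_sqrt hd.le]
    have e2 : (Real.exp (-(1/4) * min 1 t)) ^ 2 = Real.exp (-(1/2) * min 1 t) := by
      rw [sq, ← Real.exp_add]; ring_nf
    rw [e1, e2]
    have ha2 : (0:ℝ) < a ^ 2 := by positivity
    have e3 : a ^ 2 / (a ^ 2 + y ^ 2) = 1 / (1 + t) := by
      rw [htdef]; field_simp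
    rw [e3]
    have h1t : (0:ℝ) < 1 + t := by linarith
    rw [div_le_iff₀ h1t]
    calc (1:ℝ) = Real.exp (-(1/2) * min 1 t) * Real.exp ((1/2) * min 1 t) := by
          rw [← Real.exp_add, show -(1/2) * min 1 t + (1/2) * min 1 t = 0 by ring, Real.exp_zero]
      _ ≤ Real.exp (-(1/2) * min 1 t) * (1 + t) :=
          mul_le_mul_of_nonneg_left hexp (Real.exp_nonneg _)
  calc a / Real.sqrt (a ^ 2 + y ^ 2)
      = Real.sqrt ((a / Real.sqrt (a ^ 2 + y ^ 2)) ^ 2) := by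
        rw [Real.sqrt_sq (by positivity)]
    _ ≤ Real.sqrt ((Real.exp (-(1/4) * min 1 t)) ^ 2) := Real.sqrt_le_sqrt hsq
    _ = Real.exp (-(1/4) * min 1 t) := Real.sqrt_sq (Real.exp_nonneg _)

private noncomputable def Ftel (y a : ℝ) : ℝ := if a ≤ |y| then 2*|y| - a else y^2/a

private lemma Ftel_step (y a : ℝ) (ha : 1 ≤ a) : Ftel y a - Ftel y (a+1) ≤ min 1 (y^2/a^2) := by
  have ha0 : (0:ℝ) < a := by linarith
  have hy2 : y^2 = |y|^2 := (_root_.sq_abs y).symm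
  unfold Ftel
  split_ifs with h1 h2 h2
  · have hmin : min 1 (y^2/a^2) = 1 := by
      apply min_eq_left
      rw [le_div_iff₀ (by positivity)]
      nlinarith [abs_nonneg y]
    rw [hmin]; linarith
  · have hmin : min 1 (y^2/a^2) = 1 := by
      apply min_eq_left
      rw [le_div_iff₀ (by positivity)]
      nlinarith [abs_nonneg y]
    rw [hmin]
    have h3 : y^2/(a+1) ≥ 2*|y| - (a+1) := by
      rw [ge_iff_le, le_div_iff₀ (by linarith : (0:ℝ) < a+1)]
      nlinarith [sq_nonneg (a+1-|y|)]
    linarith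
  · exact absurd h2 (by push_neg; linarith)
  · have key : y^2/a - y^2/(a+1) = y^2/(a*(a+1)) := by
      field_simp; ring
    rw [key]
    apply le_min
    · rw [div_le_one (by positivity)]
      nlinarith [abs_nonneg y]
    · apply div_le_div_of_nonneg_left (by positivity) (by positivity)
      nlinarith

private lemma Ftel_sum (y x : ℝ) (hx : 1 ≤ x) (n : ℕ) :
    Ftel y x - Ftel y (x + n) ≤ ∑ j ∈ range n, min 1 (y^2/(x+j)^2) := by
  have e : Ftel y x - Ftel y (x + n)
      = ∑ j ∈ range n, (Ftel y (x + j) - Ftel y (x + j + 1)) := by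
    rw [show (∑ j ∈ range n, (Ftel y (x + j) - Ftel y (x + j + 1)))
        = ∑ j ∈ range n, ((fun k : ℕ => Ftel y (x + k)) j - (fun k : ℕ => Ftel y (x + k)) (j+1))
        from by
          apply Finset.sum_congr rfl; intro j _; push_cast; ring_nf,
      Finset.sum_range_sub' (fun k : ℕ => Ftel y (x + k)) n]
    simp
  rw [e]
  apply Finset.sum_le_sum
  intro j _
  exact Ftel_step y (x + j) (by have := Nat.cast_nonneg (α := ℝ) j; linarith)

private lemma gammaSeq_abs (x y : ℝ) (hx : 1 ≤ x) (n : ℕ) (hn : 1 ≤ n) :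
    ‖Complex.GammaSeq (x + y*I) n / Complex.GammaSeq x n‖
      = ∏ j ∈ range (n+1), ((x+j) / Real.sqrt ((x+j)^2 + y^2)) := by
  have hnpos : (0:ℝ) < n := by exact_mod_cast hn
  rw [norm_div, Complex.GammaSeq, Complex.GammaSeq, norm_div, norm_div, norm_mul, norm_mul,
    norm_prod, norm_prod]
  have h1 : ‖(n:ℂ) ^ (↑x + ↑y*I)‖ = (n:ℝ) ^ x := by
    rw [show ((n:ℂ)) = (((n:ℝ)):ℂ) by push_cast; ring,
      Complex.norm_cpow_eq_rpow_re_of_pos hnpos]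
    simp
  have h2 : ‖(n:ℂ) ^ (x:ℂ)‖ = (n:ℝ) ^ x := by
    rw [show ((n:ℂ)) = (((n:ℝ)):ℂ) by push_cast; ring,
      Complex.norm_cpow_eq_rpow_re_of_pos hnpos]
    simp
  have h3 : ∀ j : ℕ, ‖(x:ℂ) + j‖ = x + j := by
    intro j
    rw [show ((x:ℂ) + j) = (((x + j : ℝ)):ℂ) by push_cast; ring, Complex.norm_real, Real.norm_eq_abs,
      abs_of_pos (by positivity)]
  have h4 : ∀ j : ℕ, ‖(x:ℂ) + (y:ℂ)*I + j‖ = Real.sqrt ((x+j)^2 + y^2) := by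
    intro j
    rw [Complex.norm_def, Complex.normSq_apply]
    simp only [Complex.add_re, Complex.add_im, Complex.ofReal_re, Complex.ofReal_im,
      Complex.mul_re, Complex.mul_im, Complex.I_re, Complex.I_im, Complex.natCast_re,
      Complex.natCast_im]
    ring_nf
  rw [h1, h2]
  rw [Finset.prod_congr rfl (fun j _ => h3 j), Finset.prod_congr rfl (fun j _ => h4 j)]
  have hA : ((n:ℝ) ^ x * ‖(n.factorial : ℂ)‖) ≠ 0 := by
    have : ‖(n.factorial : ℂ)‖ = (n.factorial : ℝ) := by
      rw [show ((n.factorial : ℂ)) = (((n.factorial : ℝ)):ℂ) by push_cast; ring,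
        Complex.norm_real, Real.norm_eq_abs, abs_of_pos (by positivity)]
    rw [this]
    positivity
  rw [div_div_div_comm, div_self hA, one_div, ← Finset.prod_div_distrib]
  rw [← Finset.prod_inv_distrib]
  exact Finset.prod_congr rfl fun j _ => by rw [inv_div]

theorem gamma_ratio_bound (x y : ℝ) (hx : 1 ≤ x) :
    ‖Complex.Gamma (x + y * I) / Complex.Gamma (x)‖ ≤
      Real.exp (-(1/4) * min |y| (y ^ 2 / x)) := by
  have hx0 : (0:ℝ) < x := by linarith
  have hΓx : Complex.Gamma (x : ℂ) ≠ 0 := by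
    rw [Complex.Gamma_ofReal]
    exact_mod_cast (Real.Gamma_pos_of_pos hx0).ne'
  have hlim : Tendsto (fun n => ‖Complex.GammaSeq (x + y*I) n / Complex.GammaSeq x n‖)
      atTop (𝓝 (‖Complex.Gamma (x + y*I) / Complex.Gamma x‖)) :=
    (continuous_norm.tendsto _).comp
      ((Complex.GammaSeq_tendsto_Gamma (x + y*I)).div (Complex.GammaSeq_tendsto_Gamma x) hΓx)
  -- limit of the bound sequence
  have hF0 : Tendsto (fun n : ℕ => Ftel y (x + (n+1))) atTop (𝓝 0) := by
    have hdiv : Tendsto (fun n : ℕ => y^2 / (x + ((n:ℝ)+1))) atTop (𝓝 0) := by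
      apply Tendsto.div_atTop (tendsto_const_nhds)
      apply tendsto_atTop_add_const_left
      exact tendsto_atTop_add_const_right _ _ tendsto_natCast_atTop_atTop
    apply hdiv.congr'
    filter_upwards [eventually_gt_atTop ⌈|y|⌉₊] with n hn
    have h1 : |y| ≤ (n:ℝ) := le_trans (Nat.le_ceil _) (by exact_mod_cast hn.le)
    rw [Ftel, if_neg (by push_neg; linarith)]
  have hblim : Tendsto (fun n : ℕ => Real.exp (-(1/4) * (Ftel y x - Ftel y (x + (n+1)))))
      atTop (𝓝 (Real.exp (-(1/4) * Ftel y x))) := by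
    have : Tendsto (fun n : ℕ => -(1/4) * (Ftel y x - Ftel y (x + (n+1)))) atTop
        (𝓝 (-(1/4) * (Ftel y x - 0))) :=
      (tendsto_const_nhds.sub hF0).const_mul _
    rw [sub_zero] at this
    exact (Real.continuous_exp.tendsto _).comp this
  -- the eventual bound
  have hbound : ∀ᶠ n : ℕ in atTop,
      ‖Complex.GammaSeq (x + y*I) n / Complex.GammaSeq x n‖
        ≤ Real.exp (-(1/4) * (Ftel y x - Ftel y (x + (n+1)))) := by
    filter_upwards [eventually_ge_atTop 1] with n hn
    rw [gammaSeq_abs x y hx n hn]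
    calc ∏ j ∈ range (n+1), ((x+j) / Real.sqrt ((x+j)^2 + y^2))
        ≤ ∏ j ∈ range (n+1), Real.exp (-(1/4) * min 1 (y^2/(x+j)^2)) := by
          apply Finset.prod_le_prod
          · intro j _; positivity
          · intro j _
            exact factor_le' (x + j) y (by positivity)
      _ = Real.exp (∑ j ∈ range (n+1), -(1/4) * min 1 (y^2/(x+j)^2)) :=
          (Real.exp_sum _ _).symm
      _ ≤ Real.exp (-(1/4) * (Ftel y x - Ftel y (x + (n+1)))) := by
          rw [Real.exp_le_exp, ← Finset.mul_sum]
          have hs := Ftel_sum y x hx (n+1)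
          push_cast at hs
          nlinarith [hs]
  have key : ‖Complex.Gamma (x + y*I) / Complex.Gamma x‖
      ≤ Real.exp (-(1/4) * Ftel y x) :=
    le_of_tendsto_of_tendsto hlim hblim hbound
  refine key.trans ?_
  rw [Real.exp_le_exp]
  have hF : min |y| (y^2/x) ≤ Ftel y x := by
    rw [Ftel]
    split_ifs with h
    · exact le_trans (min_le_left _ _) (by linarith)
    · exact min_le_right _ _
  nlinarith [hF]
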